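/- Let $\eta \in (0,1)$, $\epsilon_1 \in (0,1)$, and $k = \lceil \frac{1}{\eta^2} \ln(2/\epsilon_1) \rceil$. Define the polynomial $p_k(z) = z \sum_{i=0}^{k} (1 - z^2)^i \prod_{j=1}^{i} \frac{2j-1}{2j}$ of degree $2k+1$. Then for all $x \in [-1, -\eta] \cup [\eta, 1]$, $|\mathrm{sgn}(x) - p_k(x)| \le \epsilon_1/2$. -/

import Mathlib

open Finset Real

/-- The polynomial `p_k(z) = z ∑_{i=0}^k (1-z²)^i ∏_{j=1}^i (2j-1)/(2j)`. -/
noncomputable def pSign (k : ℕ) (z : ℝ) : ℝ :=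
  z * ∑ i ∈ range (k + 1), (1 - z ^ 2) ^ i * ∏ j ∈ Icc 1 i, ((2 * (j : ℝ) - 1) / (2 * j))

set_option maxHeartbeats 1000000
noncomputable def cS (i : ℕ) : ℝ := ∏ j ∈ Icc 1 i, ((2 * (j : ℝ) - 1) / (2 * j))

lemma cS_zero : cS 0 = 1 := by simp [cS]

lemma cS_succ (i : ℕ) : cS (i + 1) = cS i * ((2 * i + 1) / (2 * i + 2)) := by
  unfold cS
  rw [Finset.prod_Icc_succ_top (by omega)]
  congr 1
  push_cast; ring_nf

lemma cS_pos (i : ℕ) : 0 < cS i := by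
  induction i with
  | zero => simp [cS_zero]
  | succ i ih =>
    rw [cS_succ]
    have : (0:ℝ) < (2 * i + 1) / (2 * i + 2) := by positivity
    positivity

lemma cS_sq (i : ℕ) : cS i ^ 2 * (2 * i + 1) ≤ 1 := by
  induction i with
  | zero => simp [cS_zero]
  | succ i ih =>
    rw [cS_succ, mul_pow, div_pow]
    have h2 : (0:ℝ) < (2 * (i:ℝ) + 2) ^ 2 := by positivity
    rw [mul_comm (cS i ^ 2) _, mul_assoc, div_mul_eq_mul_div, div_le_one h2]
    push_cast
    nlinarith [mul_le_mul_of_nonneg_right ih (show (0:ℝ) ≤ (2*i+1)*(2*i+3) by positivity), cS_pos i, sq_nonneg (cS i)]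

lemma pSign_succ (k : ℕ) (z : ℝ) :
    pSign (k + 1) z = pSign k z + z * ((1 - z ^ 2) ^ (k + 1) * cS (k + 1)) := by
  unfold pSign cS
  rw [sum_range_succ]
  ring

lemma sq_deriv (x : ℝ) (n : ℕ) :
    HasDerivAt (fun z : ℝ => (1 - z ^ 2) ^ (n + 1))
      ((n + 1 : ℝ) * (1 - x ^ 2) ^ n * (-(2 * x))) x := by
  have h : HasDerivAt (fun z : ℝ => 1 - z ^ 2) (-(2 * x)) x := by
    simpa using (hasDerivAt_pow 2 x).const_sub 1
  simpa using h.fun_pow (n + 1)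

lemma pSign_deriv (k : ℕ) (x : ℝ) :
    HasDerivAt (pSign k) ((2 * k + 1) * cS k * (1 - x ^ 2) ^ k) x := by
  induction k with
  | zero =>
    have h : pSign 0 = fun z : ℝ => z := by
      funext z; simp [pSign]
    rw [h]
    simpa [cS_zero] using hasDerivAt_id' x
  | succ k ih =>
    have h : pSign (k + 1) = fun z => pSign k z + z * ((1 - z ^ 2) ^ (k + 1) * cS (k + 1)) :=
      funext (pSign_succ k)
    rw [h]
    have h2 := (hasDerivAt_id' x).fun_mul ((sq_deriv x k).mul_const (cS (k + 1)))
    have h3 := ih.fun_add h2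
    refine h3.congr_deriv ?_
    rw [cS_succ, pow_succ]
    have hne : (2 * (k:ℝ) + 2) ≠ 0 := by positivity
    push_cast
    field_simp
    try ring

lemma pSign_one (k : ℕ) : pSign k 1 = 1 := by
  unfold pSign
  rw [show (1:ℝ) - 1 ^ 2 = 0 by norm_num]
  rw [Finset.sum_eq_single 0 (fun i _ hi => by simp [zero_pow hi]) (by simp)]
  simp

lemma pSign_neg (k : ℕ) (x : ℝ) : pSign k (-x) = -pSign k x := by
  unfold pSign
  rw [show (-x) ^ 2 = x ^ 2 from neg_sq x]
  ring

lemma key_pos (η ε₁ : ℝ) (hη : η ∈ Set.Ioo (0 : ℝ) 1) (hε : ε₁ ∈ Set.Ioo (0 : ℝ) 1)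
    (k : ℕ) (hk : k = ⌈(1 / η ^ 2) * Real.log (2 / ε₁)⌉₊)
    (x : ℝ) (hx : x ∈ Set.Icc η 1) :
    |Real.sign x - pSign k x| ≤ ε₁ / 2 := by
  obtain ⟨hη0, hη1⟩ := hη
  obtain ⟨hε0, hε1⟩ := hε
  obtain ⟨hx1, hx2⟩ := hx
  have hx0 : 0 < x := lt_of_lt_of_le hη0 hx1
  rw [Real.sign_of_pos hx0]
  -- log facts
  have h2ε : (0:ℝ) < 2 / ε₁ := by positivity
  have hlog2 : Real.log 2 ≤ Real.log (2 / ε₁) := by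
    apply Real.log_le_log (by norm_num)
    rw [le_div_iff₀ hε0]; nlinarith
  have hlogpos : 0 < Real.log (2 / ε₁) := lt_of_lt_of_le (Real.log_pos (by norm_num)) hlog2
  have hkge : (1 / η ^ 2) * Real.log (2 / ε₁) ≤ (k : ℝ) := by
    rw [hk]; exact Nat.le_ceil _
  have hkη : Real.log (2 / ε₁) ≤ (k : ℝ) * η ^ 2 := by
    have hη2 : (0:ℝ) < η ^ 2 := by positivity
    calc Real.log (2 / ε₁) = (1 / η ^ 2) * Real.log (2 / ε₁) * η ^ 2 := by field_simp
    _ ≤ (k : ℝ) * η ^ 2 := by nlinarith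
  -- FTC : 1 - pSign k x = ∫ deriv
  have hcont : Continuous (fun t : ℝ => (2 * (k:ℝ) + 1) * cS k * (1 - t ^ 2) ^ k) := by
    continuity
  have hftc : ∫ t in x..1, (2 * (k:ℝ) + 1) * cS k * (1 - t ^ 2) ^ k
      = pSign k 1 - pSign k x :=
    intervalIntegral.integral_eq_sub_of_hasDerivAt (fun t _ => pSign_deriv k t)
      (hcont.intervalIntegrable _ _)
  have herr : 1 - pSign k x = ∫ t in x..1, (2 * (k:ℝ) + 1) * cS k * (1 - t ^ 2) ^ k := by
    rw [hftc, pSign_one]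
  -- nonnegativity of integrand on [η,1]
  have hnn : ∀ t ∈ Set.Icc η 1, 0 ≤ (2 * (k:ℝ) + 1) * cS k * (1 - t ^ 2) ^ k := by
    intro t ht
    have h1 : (0:ℝ) ≤ (1 - t ^ 2) ^ k := pow_nonneg (by nlinarith [ht.1, ht.2]) k
    have h2 := (cS_pos k).le
    positivity
  -- lower bound
  have hlow : 0 ≤ 1 - pSign k x := by
    rw [herr]
    apply intervalIntegral.integral_nonneg hx2
    intro t ht
    exact hnn t ⟨le_trans hx1 ht.1, ht.2⟩
  -- continuity of comparison integrand
  have hcont2 : Continuous (fun t : ℝ => t / η * ((2 * (k:ℝ) + 1) * cS k * (1 - t ^ 2) ^ k)) := by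
    fun_prop
  have hmono : ∫ t in x..1, (2 * (k:ℝ) + 1) * cS k * (1 - t ^ 2) ^ k
      ≤ ∫ t in x..1, t / η * ((2 * (k:ℝ) + 1) * cS k * (1 - t ^ 2) ^ k) := by
    apply intervalIntegral.integral_mono_on hx2 (hcont.intervalIntegrable _ _)
      (hcont2.intervalIntegrable _ _)
    intro t ht
    have h1 : (1:ℝ) ≤ t / η := (one_le_div hη0).mpr (le_trans hx1 ht.1)
    have h2 := hnn t ⟨le_trans hx1 ht.1, ht.2⟩
    nlinarith
  -- extend lower limit to η
  have hsplit : ∫ t in η..1, t / η * ((2 * (k:ℝ) + 1) * cS k * (1 - t ^ 2) ^ k)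
      = (∫ t in η..x, t / η * ((2 * (k:ℝ) + 1) * cS k * (1 - t ^ 2) ^ k))
        + ∫ t in x..1, t / η * ((2 * (k:ℝ) + 1) * cS k * (1 - t ^ 2) ^ k) :=
    (intervalIntegral.integral_add_adjacent_intervals
      (hcont2.intervalIntegrable _ _)
      (hcont2.intervalIntegrable _ _)).symm
  have hfirst : 0 ≤ ∫ t in η..x, t / η * ((2 * (k:ℝ) + 1) * cS k * (1 - t ^ 2) ^ k) := by
    apply intervalIntegral.integral_nonneg hx1
    intro t ht
    have h2 := hnn t ⟨ht.1, le_trans ht.2 hx2⟩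
    have h3 : 0 ≤ t / η := div_nonneg (le_trans hη0.le ht.1) hη0.le
    positivity
  -- compute the full integral from η to 1
  have hcomp : ∫ t in η..1, t / η * ((2 * (k:ℝ) + 1) * cS k * (1 - t ^ 2) ^ k)
      = (2 * (k:ℝ) + 1) * cS k / η * ((1 - η ^ 2) ^ (k + 1) / (2 * (k + 1))) := by
    have hG : ∀ t : ℝ, HasDerivAt
        (fun t : ℝ => (2 * (k:ℝ) + 1) * cS k / η * (-(1 - t ^ 2) ^ (k + 1) / (2 * (k + 1))))
        (t / η * ((2 * (k:ℝ) + 1) * cS k * (1 - t ^ 2) ^ k)) t := by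
      intro t
      have h := (((sq_deriv t k).fun_neg).div_const (2 * ((k:ℝ) + 1))).const_mul
        ((2 * (k:ℝ) + 1) * cS k / η)
      refine h.congr_deriv ?_
      have hne : ((k:ℝ) + 1) ≠ 0 := by positivity
      field_simp
    rw [intervalIntegral.integral_eq_sub_of_hasDerivAt (fun t _ => hG t)
      (hcont2.intervalIntegrable _ _)]
    rw [show (1:ℝ) - 1 ^ 2 = 0 by norm_num]
    rw [zero_pow (Nat.succ_ne_zero k)]
    field_simp
    try ring
  -- assemble the upper bound
  have hub : 1 - pSign k x ≤ (2 * (k:ℝ) + 1) * cS k / η * ((1 - η ^ 2) ^ (k + 1) / (2 * (k + 1))) := by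
    rw [herr, ← hcomp, hsplit]
    linarith
  -- rewrite as cS (k+1) / η * (1-η²)^(k+1)
  have hBeq : (2 * (k:ℝ) + 1) * cS k / η * ((1 - η ^ 2) ^ (k + 1) / (2 * (k + 1)))
      = cS (k + 1) / η * (1 - η ^ 2) ^ (k + 1) := by
    rw [cS_succ]
    push_cast
    field_simp
    try ring
  -- cS (k+1) ≤ η
  have hcη : cS (k + 1) ≤ η := by
    have h1 := cS_sq (k + 1)
    have ha : (0.6931471803 : ℝ) ≤ (k:ℝ) * η ^ 2 :=
      le_trans (le_trans Real.log_two_gt_d9.le hlog2) hkη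
    have h2 : (1:ℝ) ≤ η ^ 2 * (2 * ((k:ℝ) + 1) + 1) := by
      nlinarith [ha, sq_nonneg η]
    have h3 := cS_pos (k + 1)
    push_cast at h1
    have hK : (0:ℝ) < 2 * ((k:ℝ) + 1) + 1 := by positivity
    have hc2 : cS (k + 1) ^ 2 ≤ η ^ 2 :=
      (mul_le_mul_iff_of_pos_right hK).mp (le_trans h1 h2)
    nlinarith [hc2, h3, hη0]
  have hη2nn : (0:ℝ) ≤ 1 - η ^ 2 := by nlinarith
  have hstep1 : cS (k + 1) / η * (1 - η ^ 2) ^ (k + 1) ≤ (1 - η ^ 2) ^ (k + 1) := by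
    have h1 : cS (k + 1) / η ≤ 1 := (div_le_one hη0).mpr hcη
    have h2 : (0:ℝ) ≤ (1 - η ^ 2) ^ (k + 1) := by positivity
    nlinarith
  have hstep2 : (1 - η ^ 2) ^ (k + 1) ≤ (1 - η ^ 2) ^ k :=
    pow_le_pow_of_le_one hη2nn (by nlinarith) (Nat.le_succ k)
  have hstep3 : (1 - η ^ 2) ^ k ≤ Real.exp (-((k:ℝ) * η ^ 2)) := by
    have h1 : 1 - η ^ 2 ≤ Real.exp (-η ^ 2) := by
      have := Real.add_one_le_exp (-η ^ 2)
      linarith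
    calc (1 - η ^ 2) ^ k ≤ Real.exp (-η ^ 2) ^ k := pow_le_pow_left₀ hη2nn h1 k
    _ = Real.exp (-((k:ℝ) * η ^ 2)) := by
        rw [← Real.exp_nat_mul]; ring_nf
  have hstep4 : Real.exp (-((k:ℝ) * η ^ 2)) ≤ ε₁ / 2 := by
    have h1 : Real.exp (-((k:ℝ) * η ^ 2)) ≤ Real.exp (-Real.log (2 / ε₁)) :=
      Real.exp_le_exp.mpr (by linarith)
    have h2 : Real.exp (-Real.log (2 / ε₁)) = ε₁ / 2 := by
      rw [Real.exp_neg, Real.exp_log h2ε]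
      field_simp
    linarith
  rw [abs_le]
  constructor
  · nlinarith
  · calc 1 - pSign k x ≤ cS (k + 1) / η * (1 - η ^ 2) ^ (k + 1) := by rw [← hBeq]; exact hub
    _ ≤ ε₁ / 2 := by linarith

/-- With `k = ⌈(1/η²) ln(2/ε₁)⌉`, for all `x ∈ [-1,-η] ∪ [η,1]`,
`|sgn(x) - p_k(x)| ≤ ε₁/2`. -/
theorem sign_poly_approx (η ε₁ : ℝ) (hη : η ∈ Set.Ioo (0 : ℝ) 1)
    (hε : ε₁ ∈ Set.Ioo (0 : ℝ) 1)
    (k : ℕ) (hk : k = ⌈(1 / η ^ 2) * Real.log (2 / ε₁)⌉₊)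
    (x : ℝ) (hx : x ∈ Set.Icc (-1 : ℝ) (-η) ∪ Set.Icc η 1) :
    |Real.sign x - pSign k x| ≤ ε₁ / 2 := by
  rcases hx with h | h
  · -- x ∈ [-1, -η]
    obtain ⟨h1, h2⟩ := h
    have hy : -x ∈ Set.Icc η 1 := ⟨by linarith, by linarith⟩
    have := key_pos η ε₁ hη hε k hk (-x) hy
    have hx0 : x < 0 := by
      have := hη.1; linarith
    rw [Real.sign_of_pos (by linarith : (0:ℝ) < -x), pSign_neg] at this
    rw [Real.sign_of_neg hx0]
    rw [show (-1 : ℝ) - pSign k x = -(1 - -pSign k x) by ring, abs_neg]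
    simpa using this
  · exact key_pos η ε₁ hη hε k hk x h
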